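/- arXiv:2409.03338 — 6 statements merged into one kernel-verified Lean document; each statement's English description precedes it below -/
import Mathlib

section
/- Let T = U|T| be the polar decomposition of an invertible bounded operator T on a Hilbert space H, with U unitary. If m is the λ-weighted arithmetic mean, i.e., Δ_m(T) = (1-λ)|T|U + λU|T| for λ ∈ [0,1], then Δ_m(T) = U·((1-λ)U*|T|U + λ|T|), and since (1-λ)U*|T|U + λ|T| is positive (and invertible), this gives the polar decomposition of Δ_m(T); in particular |Δ_m(T)| = (1-λ)U*|T|U + λ|T|. -/
lemma smul_isPositive {H : Type*} [NormedAddCommGroup H] [InnerProductSpace ℂ H]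
    [CompleteSpace H] {T : H →L[ℂ] H} (hT : T.IsPositive) {c : ℝ} (hc : 0 ≤ c) :
    (c • T).IsPositive := by
  refine ⟨ContinuousLinearMap.isSelfAdjoint_iff_isSymmetric.mp (IsSelfAdjoint.smul (star_trivial c) hT.isSelfAdjoint), fun x => ?_⟩
  have := hT.2 x
  simp only [ContinuousLinearMap.reApplyInnerSelf, ContinuousLinearMap.smul_apply] at *
  rw [RCLike.real_smul_eq_coe_smul (K := ℂ), inner_smul_left, RCLike.conj_ofReal]
  simp only [RCLike.ofReal_re, RCLike.mul_re, RCLike.ofReal_im, zero_mul, sub_zero]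
  exact mul_nonneg hc this

/-- For `T = U * P` the polar decomposition of an invertible operator `T`
(`U` unitary, `P = |T|` positive with `P * P = T* T`) and `λ ∈ [0,1]`, the weighted
arithmetic mean transform `Δ = (1-λ)•(P*U) + λ•(U*P)` satisfies
`Δ = U * R` where `R = (1-λ)•(U* P U) + λ•P` is positive and invertible, and
`R = |Δ|` (i.e. `Δ* Δ = R * R`). -/
theorem stmt0 {H : Type*} [NormedAddCommGroup H] [InnerProductSpace ℂ H]
    [CompleteSpace H] (T U P : H →L[ℂ] H) (lam : ℝ)
    (hlam : lam ∈ Set.Icc (0 : ℝ) 1)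
    (hU : U ∈ unitary (H →L[ℂ] H))
    (hP : P.IsPositive) (hP2 : P * P = star T * T)
    (hT : T = U * P) (hTinv : IsUnit T) :
    (1 - lam) • (P * U) + lam • (U * P) =
      U * ((1 - lam) • (star U * P * U) + lam • P) ∧
    ((1 - lam) • (star U * P * U) + lam • P).IsPositive ∧
    IsUnit ((1 - lam) • (star U * P * U) + lam • P) ∧
    star ((1 - lam) • (P * U) + lam • (U * P)) *
        ((1 - lam) • (P * U) + lam • (U * P)) =
      ((1 - lam) • (star U * P * U) + lam • P) *
        ((1 - lam) • (star U * P * U) + lam • P) := by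
  obtain ⟨hlam0, hlam1⟩ := hlam
  obtain ⟨hU1, hU2⟩ := (Unitary.mem_iff).mp hU
  -- U is a unit
  have hUunit : IsUnit U := ⟨⟨U, star U, hU2, hU1⟩, rfl⟩
  have hUstarUnit : IsUnit (star U) := ⟨⟨star U, U, hU1, hU2⟩, rfl⟩
  -- P is a unit
  have hPeq : P = star U * T := by rw [hT, ← mul_assoc, hU1, one_mul]
  have hPunit : IsUnit P := hPeq ▸ hUstarUnit.mul hTinv
  -- the conjugated operator
  have hXunit : IsUnit (star U * P * U) := (hUstarUnit.mul hPunit).mul hUunit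
  have hXpos : (star U * P * U).IsPositive := by
    have := hP.conj_adjoint (star U)
    rwa [← ContinuousLinearMap.star_eq_adjoint, star_star] at this
  set R := (1 - lam) • (star U * P * U) + lam • P with hR
  -- Part 1
  have h1 : U * (star U * P * U) = P * U := by
    rw [← mul_assoc, ← mul_assoc, hU2, one_mul]
  have part1 : (1 - lam) • (P * U) + lam • (U * P) = U * R := by
    rw [hR, mul_add, mul_smul_comm, mul_smul_comm, h1]
  -- Part 2
  have part2 : R.IsPositive :=
    (smul_isPositive hXpos (by linarith)).add (smul_isPositive hP hlam0)
  -- Part 3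
  have part3 : IsUnit R := by
    rcases eq_or_lt_of_le hlam1 with h | h
    · have : R = P := by rw [hR, h]; norm_num
      rw [this]; exact hPunit
    · have hpos : (0:ℝ) < 1 - lam := by linarith
      have hAunit : IsUnit ((1 - lam) • (star U * P * U)) := by
        have := hXunit.smul (Units.mk0 (1 - lam) hpos.ne')
        simpa [Units.smul_def] using this
      have hApos : (0 : H →L[ℂ] H) ≤ (1 - lam) • (star U * P * U) :=
        (ContinuousLinearMap.nonneg_iff_isPositive _).mpr
          (smul_isPositive hXpos hpos.le)
      have hle : (1 - lam) • (star U * P * U) ≤ R := by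
        rw [ContinuousLinearMap.le_def]
        have : R - (1 - lam) • (star U * P * U) = lam • P := by rw [hR]; abel
        rw [this]
        exact smul_isPositive hP hlam0
      exact CStarAlgebra.isUnit_of_le _ hle (hAunit.isStrictlyPositive hApos)
    -- Part 4
  have hRsa : star R = R := part2.isSelfAdjoint
  have part4 : star ((1 - lam) • (P * U) + lam • (U * P)) *
        ((1 - lam) • (P * U) + lam • (U * P)) = R * R := by
    rw [part1, star_mul, mul_assoc, ← mul_assoc (star U), hU1, one_mul, hRsa]
  exact ⟨part1, part2, part3, part4⟩
end

section
/- Let T = U|T| ∈ B(H) be invertible with U unitary, λ ∈ (0,1), and suppose T* is semi-hyponormal, i.e., |T| ≤ U|T|U*. Then the sequence U^{*n}|T|U^n is decreasing and converges strongly to some positive L, and the weighted binomial averages Σ_{k=0}^n C(n,k)(1-λ)^k λ^{n-k} U^{*k}|T|U^k decrease to L as n → ∞. -/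
set_option synthInstance.maxHeartbeats 1000000
set_option maxHeartbeats 1000000


open ContinuousLinearMap RCLike in
lemma myPos_norm_sq_le {H : Type*} [NormedAddCommGroup H] [InnerProductSpace ℂ H]
    [CompleteSpace H] {B : H →L[ℂ] H} (hB : B.IsPositive) (x : H) :
    ‖B x‖ ^ 2 ≤ ‖B‖ * RCLike.re (inner ℂ (B x) x : ℂ) := by
  rcases eq_or_lt_of_le (norm_nonneg B) with h0 | h0
  · have : B = 0 := by simpa using (norm_eq_zero.mp h0.symm)
    simp [this]
  have hsym := hB.1
  set t : ℝ := -(1 / ‖B‖) with ht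
  have key : 0 ≤ RCLike.re (inner ℂ (B (x + (t : ℂ) • B x)) (x + (t : ℂ) • B x) : ℂ) := hB.2 _
  have expand : (inner ℂ (B (x + (t : ℂ) • B x)) (x + (t : ℂ) • B x) : ℂ)
      = inner ℂ (B x) x + (t : ℂ) * inner ℂ (B x) (B x)
        + (t : ℂ) * inner ℂ (B (B x)) x + (t : ℂ) * (t : ℂ) * inner ℂ (B (B x)) (B x) := by
    rw [map_add, map_smul, inner_add_left, inner_add_right, inner_add_right,
      inner_smul_left, inner_smul_right, inner_smul_left, inner_smul_right]
    push_cast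
    ring_nf
    simp [RCLike.conj_ofReal]
    ring
  have hBBx : (inner ℂ (B (B x)) x : ℂ) = inner ℂ (B x) (B x) := hsym (B x) x
  have hnorm : (inner ℂ (B x) (B x) : ℂ) = ((‖B x‖ ^ 2 : ℝ) : ℂ) := by
    rw [inner_self_eq_norm_sq_to_K]; norm_cast
  have hb2 : RCLike.re (inner ℂ (B (B x)) (B x) : ℂ) ≤ ‖B‖ * ‖B x‖ ^ 2 := by
    calc RCLike.re (inner ℂ (B (B x)) (B x) : ℂ) ≤ ‖(inner ℂ (B (B x)) (B x) : ℂ)‖ :=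
          RCLike.re_le_norm _
      _ ≤ ‖B (B x)‖ * ‖B x‖ := norm_inner_le_norm _ _
      _ ≤ ‖B‖ * ‖B x‖ ^ 2 := by
          have := B.le_opNorm (B x)
          nlinarith [norm_nonneg (B x)]
  rw [expand] at key
  simp only [map_add, hBBx, hnorm] at key
  have hre1 : RCLike.re ((t : ℂ) * ((‖B x‖ ^ 2 : ℝ) : ℂ)) = t * ‖B x‖ ^ 2 := by norm_cast
  have hre2 : RCLike.re ((t : ℂ) * (t : ℂ) * (inner ℂ (B (B x)) (B x) : ℂ))
      = (t * t) * RCLike.re (inner ℂ (B (B x)) (B x) : ℂ) := by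
    have h : ((t : ℂ) * (t : ℂ)) = ((t * t : ℝ) : ℂ) := by push_cast; ring
    rw [h, RCLike.mul_re]
    simp
  rw [hre1, hre2] at key
  set a := RCLike.re (inner ℂ (B x) x : ℂ) with ha
  set c := RCLike.re (inner ℂ (B (B x)) (B x) : ℂ) with hc
  set s := ‖B x‖ ^ 2 with hs
  set b := ‖B‖ with hbdef
  have hcpos : 0 ≤ c := hB.2 (B x)
  have hs0 : 0 ≤ s := by positivity
  have htt : t * t = 1 / b ^ 2 := by rw [ht]; field_simp
  have h3 : (t * t) * c ≤ (1 / b ^ 2) * (b * s) := by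
    rw [htt]
    exact mul_le_mul_of_nonneg_left hb2 (by positivity)
  have h4 : (1 / b ^ 2) * (b * s) = s / b := by field_simp
  have h6 : t * t * c ≤ s / b := h4 ▸ h3
  have h7 : t * s = -(s / b) := by rw [ht]; field_simp
  have key2 : 0 ≤ a - s / b := by clear_value t a c s b; linarith [key, h6, h7]
  have := mul_le_mul_of_nonneg_left key2 (le_of_lt h0)
  have hfin : s / b * b = s := by field_simp
  nlinarith [key2, h0, hfin]

open ContinuousLinearMap Filter in
lemma myLimit {H : Type*} [NormedAddCommGroup H] [InnerProductSpace ℂ H]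
    [CompleteSpace H] {A : ℕ → H →L[ℂ] H} (hA : Antitone A)
    (hpos : ∀ n, (A n).IsPositive) {M : ℝ} (hM : ∀ n, ‖A n‖ ≤ M)
    (hCS : ∀ (B : H →L[ℂ] H), B.IsPositive → ∀ x : H,
      ‖B x‖ ^ 2 ≤ ‖B‖ * RCLike.re (inner ℂ (B x) x : ℂ)) :
    ∃ L : H →L[ℂ] H, L.IsPositive ∧ (∀ x, Tendsto (fun n => A n x) atTop (nhds (L x))) := by
  have hM0 : 0 ≤ M := le_trans (norm_nonneg _) (hM 0)
  set f : H → ℕ → ℝ := fun x n => RCLike.re (inner ℂ (A n x) x : ℂ) with hf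
  have hf_anti : ∀ x, Antitone (f x) := by
    intro x m n hmn
    have hpos' : ((A m) - (A n)).IsPositive := (ContinuousLinearMap.le_def _ _).mp (hA hmn)
    have := hpos'.re_inner_nonneg_left x
    simp only [reApplyInnerSelf, sub_apply, inner_sub_left, map_sub] at this
    simp only [hf]
    linarith
  have hf_nonneg : ∀ x n, 0 ≤ f x n := fun x n => (hpos n).re_inner_nonneg_left x
  have hf_tendsto : ∀ x, Tendsto (f x) atTop (nhds (⨅ n, f x n)) := fun x =>
    tendsto_atTop_ciInf (hf_anti x) ⟨0, fun y ⟨n, hn⟩ => hn ▸ hf_nonneg x n⟩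
  have hdiff_norm : ∀ m n, ‖A m - A n‖ ≤ 2 * M := fun m n =>
    le_trans (norm_sub_le _ _) (by linarith [hM m, hM n])
  have hsq : ∀ m n, m ≤ n → ∀ x, ‖A m x - A n x‖ ^ 2 ≤ (2 * M + 1) * (f x m - f x n) := by
    intro m n hmn x
    have hpos' : ((A m) - (A n)).IsPositive := (ContinuousLinearMap.le_def _ _).mp (hA hmn)
    have h1 := hCS _ hpos' x
    simp only [sub_apply, inner_sub_left, map_sub] at h1
    have h2 : f x n ≤ f x m := hf_anti x hmn
    have h3 := hdiff_norm m n
    calc ‖A m x - A n x‖ ^ 2 ≤ ‖A m - A n‖ * (f x m - f x n) := h1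
      _ ≤ (2 * M + 1) * (f x m - f x n) := by nlinarith
  have hcauchy : ∀ x, CauchySeq (fun n => A n x) := by
    intro x
    set l := ⨅ n, f x n with hl
    have hl_le : ∀ n, l ≤ f x n := fun n =>
      ciInf_le ⟨0, fun y ⟨n, hn⟩ => hn ▸ hf_nonneg x n⟩ n
    refine cauchySeq_of_le_tendsto_0 (fun N => Real.sqrt ((2 * M + 1) * (f x N - l))) ?_ ?_
    · intro m n N hm hn
      have key : ∀ p q, N ≤ p → p ≤ q → dist (A p x) (A q x)
          ≤ Real.sqrt ((2 * M + 1) * (f x N - l)) := by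
        intro p q hp hpq
        rw [dist_eq_norm]
        have h1 := hsq p q hpq x
        have h2 : f x p - f x q ≤ f x N - l := by
          have := hf_anti x hp
          have := hl_le q
          linarith
        have h3 : ‖A p x - A q x‖ ^ 2 ≤ (2 * M + 1) * (f x N - l) := by nlinarith
        have h4 : (0:ℝ) ≤ 2 * M + 1 := by linarith
        nlinarith [Real.sq_sqrt (by nlinarith [hl_le N] : (0:ℝ) ≤ (2 * M + 1) * (f x N - l)),
          Real.sqrt_nonneg ((2 * M + 1) * (f x N - l)), norm_nonneg (A p x - A q x)]
      rcases le_total m n with h | h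
      · exact key m n hm h
      · rw [dist_comm]; exact key n m hn h
    · have : Tendsto (fun N => (2 * M + 1) * (f x N - l)) atTop (nhds 0) := by
        have := (hf_tendsto x).sub_const l
        simpa [hl] using (this.const_mul (2 * M + 1))
      simpa [Function.comp_def] using (Real.continuous_sqrt.continuousAt.tendsto.comp this)
  have hconv : ∀ x, ∃ y, Tendsto (fun n => A n x) atTop (nhds y) :=
    fun x => cauchySeq_tendsto_of_complete (hcauchy x)
  choose g hg using hconv
  have hadd : ∀ x y, g (x + y) = g x + g y := by
    intro x y
    refine tendsto_nhds_unique (by simpa [map_add] using ((hg x).add (hg y)) :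
      Tendsto (fun n => A n (x + y)) atTop (nhds (g x + g y))) (hg (x + y)) |>.symm
  have hsmul : ∀ (c : ℂ) x, g (c • x) = c • g x := by
    intro c x
    refine tendsto_nhds_unique (by simpa [map_smul] using ((hg x).const_smul c) :
      Tendsto (fun n => A n (c • x)) atTop (nhds (c • g x))) (hg (c • x)) |>.symm
  have hbound : ∀ x, ‖g x‖ ≤ M * ‖x‖ := by
    intro x
    refine le_of_tendsto ((hg x).norm) (Filter.Eventually.of_forall fun n => ?_)
    calc ‖A n x‖ ≤ ‖A n‖ * ‖x‖ := (A n).le_opNorm x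
      _ ≤ M * ‖x‖ := by nlinarith [norm_nonneg x, hM n]
  set L : H →L[ℂ] H := LinearMap.mkContinuous
    { toFun := g, map_add' := hadd, map_smul' := hsmul } M hbound with hL
  have hLapply : ∀ x, L x = g x := fun x => rfl
  refine ⟨L, ⟨?_, ?_⟩, fun x => by rw [hLapply]; exact hg x⟩
  · intro x y
    have h1 : Tendsto (fun n => (inner ℂ (A n x) y : ℂ)) atTop (nhds (inner ℂ (L x) y)) :=
      ((hg x).inner tendsto_const_nhds)
    have h2 : Tendsto (fun n => (inner ℂ x (A n y) : ℂ)) atTop (nhds (inner ℂ x (L y))) :=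
      (tendsto_const_nhds.inner (hg y))
    refine tendsto_nhds_unique (h1.congr fun n => ?_) h2
    exact (hpos n).1 x y
  · intro x
    have h1 : Tendsto (fun n => RCLike.re (inner ℂ (A n x) x : ℂ)) atTop
        (nhds (RCLike.re (inner ℂ (L x) x : ℂ))) :=
      (RCLike.continuous_re.continuousAt.tendsto.comp ((hg x).inner tendsto_const_nhds))
    exact ge_of_tendsto h1 (Filter.Eventually.of_forall fun n => (hpos n).re_inner_nonneg_left x)

open Filter Finset in
lemma myBinom_sum_one (lam : ℝ) (n : ℕ) :
    ∑ k ∈ Finset.range (n + 1), (n.choose k : ℝ) * (1 - lam) ^ k * lam ^ (n - k) = 1 := by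
  have h := (Commute.all (1 - lam) lam).add_pow n
  simp only [sub_add_cancel, one_pow] at h
  have h2 : ∑ k ∈ Finset.range (n + 1), (n.choose k : ℝ) * (1 - lam) ^ k * lam ^ (n - k)
      = ∑ k ∈ Finset.range (n + 1), (1 - lam) ^ k * lam ^ (n - k) * (n.choose k : ℝ) :=
    Finset.sum_congr rfl fun k _ => by ring
  rw [h2, ← h]

open Filter Finset in
lemma myBinom_tendsto {E : Type*} [NormedAddCommGroup E] [NormedSpace ℝ E]
    {lam : ℝ} (h0 : 0 < lam) (h1 : lam < 1) {v : ℕ → E} {l : E}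
    (hv : Tendsto v atTop (nhds l)) {M : ℝ} (hM : ∀ k, ‖v k - l‖ ≤ M) :
    Tendsto (fun n => ∑ k ∈ Finset.range (n + 1),
      ((n.choose k : ℝ) * (1 - lam) ^ k * lam ^ (n - k)) • v k) atTop (nhds l) := by
  have hM0 : 0 ≤ M := le_trans (norm_nonneg _) (hM 0)
  set w : ℕ → ℕ → ℝ := fun n k => (n.choose k : ℝ) * (1 - lam) ^ k * lam ^ (n - k) with hw
  have hlam1 : (0:ℝ) ≤ 1 - lam := by linarith
  have hw_nonneg : ∀ n k, 0 ≤ w n k := fun n k => by positivity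
  have hw_sum : ∀ n, ∑ k ∈ range (n + 1), w n k = 1 := fun n => myBinom_sum_one lam n
  have hw_tendsto : ∀ k, Tendsto (fun n => w n k) atTop (nhds 0) := by
    intro k
    have hb : Tendsto (fun n : ℕ => ((1 - lam) / lam) ^ k * ((n : ℝ) ^ k * lam ^ n))
        atTop (nhds 0) := by
      simpa using ((tendsto_pow_const_mul_const_pow_of_lt_one k h0.le h1).const_mul
        (((1 - lam) / lam) ^ k))
    refine squeeze_zero' (Eventually.of_forall fun n => hw_nonneg n k) ?_ hb
    filter_upwards [eventually_ge_atTop k] with n hn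
    have hchoose : (n.choose k : ℝ) ≤ (n : ℝ) ^ k := by
      exact_mod_cast Nat.cast_le.mpr (Nat.choose_le_pow n k)
    have hpow : lam ^ (n - k) = lam ^ n / lam ^ k := by
      rw [eq_div_iff (by positivity), ← pow_add]
      congr 1
      omega
    have hrhs : ((1 - lam) / lam) ^ k * ((n : ℝ) ^ k * lam ^ n)
        = (n:ℝ) ^ k * (1 - lam) ^ k * (lam ^ n / lam ^ k) := by
      rw [div_pow]
      ring
    have hwk : w n k = (n.choose k : ℝ) * (1 - lam) ^ k * (lam ^ n / lam ^ k) := by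
      simp only [hw]; rw [hpow]
    rw [hwk, hrhs]
    have e1 : (n.choose k : ℝ) * (1 - lam) ^ k * (lam ^ n / lam ^ k)
        ≤ (n:ℝ) ^ k * (1 - lam) ^ k * (lam ^ n / lam ^ k) := by
      apply mul_le_mul_of_nonneg_right _ (by positivity)
      exact mul_le_mul_of_nonneg_right hchoose (by positivity)
    exact e1
  -- main estimate
  rw [Metric.tendsto_atTop]
  intro ε hε
  obtain ⟨K, hK⟩ := (Metric.tendsto_atTop.mp hv) (ε / 2) (by linarith)
  have htail : Tendsto (fun n => ∑ k ∈ range K, w n k) atTop (nhds 0) := by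
    have := tendsto_finset_sum (range K) (fun k _ => hw_tendsto k)
    simpa using this
  obtain ⟨N, hN⟩ := (Metric.tendsto_atTop.mp htail) (ε / (2 * (M + 1))) (by positivity)
  refine ⟨max N K, fun n hn => ?_⟩
  have hnN : N ≤ n := le_trans (le_max_left _ _) hn
  have hnK : K ≤ n := le_trans (le_max_right _ _) hn
  have hsum_eq : ∑ k ∈ range (n + 1), w n k • (v k - l)
      = (∑ k ∈ range (n + 1), w n k • v k) - l := by
    simp only [smul_sub]
    rw [Finset.sum_sub_distrib, ← Finset.sum_smul, hw_sum, one_smul]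
  rw [dist_eq_norm, ← hsum_eq]
  calc ‖∑ k ∈ range (n + 1), w n k • (v k - l)‖
      ≤ ∑ k ∈ range (n + 1), ‖w n k • (v k - l)‖ := norm_sum_le _ _
    _ = ∑ k ∈ range (n + 1), w n k * ‖v k - l‖ := by
        refine Finset.sum_congr rfl fun k _ => ?_
        rw [norm_smul, Real.norm_of_nonneg (hw_nonneg n k)]
    _ = (∑ k ∈ range K, w n k * ‖v k - l‖)
        + ∑ k ∈ Finset.Ico K (n + 1), w n k * ‖v k - l‖ := by
        rw [Finset.sum_range_add_sum_Ico _ (by omega)]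
    _ ≤ (∑ k ∈ range K, w n k * M) + ∑ k ∈ Finset.Ico K (n + 1), w n k * (ε / 2) := by
        apply add_le_add
        · exact Finset.sum_le_sum fun k _ => mul_le_mul_of_nonneg_left (hM k) (hw_nonneg n k)
        · refine Finset.sum_le_sum fun k hk => ?_
          have hkK : K ≤ k := (Finset.mem_Ico.mp hk).1
          have := hK k hkK
          rw [dist_eq_norm] at this
          exact mul_le_mul_of_nonneg_left this.le (hw_nonneg n k)
    _ ≤ (ε / (2 * (M + 1))) * M + 1 * (ε / 2) := by
        apply add_le_add
        · rw [← Finset.sum_mul]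
          apply mul_le_mul_of_nonneg_right _ hM0
          have := hN n hnN
          rw [Real.dist_eq, sub_zero] at this
          exact le_of_lt (lt_of_abs_lt this)
        · rw [← Finset.sum_mul]
          apply mul_le_mul_of_nonneg_right _ (by linarith)
          calc ∑ k ∈ Finset.Ico K (n + 1), w n k
              ≤ ∑ k ∈ range (n + 1), w n k := by
                refine Finset.sum_le_sum_of_subset_of_nonneg ?_
                  (fun k _ _ => hw_nonneg n k)
                intro k hk
                simp only [Finset.mem_Ico, Finset.mem_range] at *
                omega
            _ = 1 := hw_sum n
    _ < ε := by
        have hstep : (ε / (2 * (M + 1))) * M < ε / 2 := by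
          rw [div_mul_eq_mul_div, div_lt_div_iff₀ (by positivity) (by norm_num)]
          nlinarith
        linarith

open ContinuousLinearMap in
lemma myPos_smul {H : Type*} [NormedAddCommGroup H] [InnerProductSpace ℂ H]
    [CompleteSpace H] {c : ℝ} (hc : 0 ≤ c) {A : H →L[ℂ] H} (hA : A.IsPositive) :
    (c • A).IsPositive := by
  constructor
  · exact ContinuousLinearMap.isSelfAdjoint_iff_isSymmetric.mp ((IsSelfAdjoint.all c).smul hA.isSelfAdjoint)
  · intro x
    have := hA.2 x
    simp only [reApplyInnerSelf, smul_apply] at this ⊢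
    rw [RCLike.real_smul_eq_coe_smul (K := ℂ), inner_smul_left]
    simp only [RCLike.conj_ofReal]
    rw [RCLike.re_ofReal_mul]
    positivity

open ContinuousLinearMap in
lemma myPos_sum {H : Type*} [NormedAddCommGroup H] [InnerProductSpace ℂ H]
    [CompleteSpace H] {ι : Type*} (s : Finset ι) (f : ι → H →L[ℂ] H)
    (hf : ∀ i ∈ s, (f i).IsPositive) : (∑ i ∈ s, f i).IsPositive := by
  induction s using Finset.cons_induction with
  | empty => simpa using ContinuousLinearMap.isPositive_zero
  | cons a s ha ih =>
    rw [Finset.sum_cons]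
    exact (hf a (Finset.mem_cons_self a s)).add (ih fun i hi => hf i (Finset.mem_cons_of_mem hi))

open ContinuousLinearMap Finset in
lemma myBinom_antitone {H : Type*} [NormedAddCommGroup H] [InnerProductSpace ℂ H]
    [CompleteSpace H] {A : ℕ → H →L[ℂ] H} (hA : Antitone A)
    {lam : ℝ} (h0 : 0 < lam) (h1 : lam < 1) :
    Antitone (fun n => ∑ k ∈ Finset.range (n + 1),
      ((n.choose k : ℝ) * (1 - lam) ^ k * lam ^ (n - k)) • A k) := by
  have hlam1 : (0:ℝ) ≤ 1 - lam := by linarith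
  set S : ℕ → H →L[ℂ] H := fun n => ∑ k ∈ range (n + 1),
    ((n.choose k : ℝ) * (1 - lam) ^ k * lam ^ (n - k)) • A k with hS
  set S' : ℕ → H →L[ℂ] H := fun n => ∑ k ∈ range (n + 1),
    ((n.choose k : ℝ) * (1 - lam) ^ k * lam ^ (n - k)) • A (k + 1) with hS'
  have hident : ∀ n, S (n + 1) = lam • S n + (1 - lam) • S' n := by
    intro n
    have hT1 : lam • S n = ∑ k ∈ range (n + 1),
        ((n.choose k : ℝ) * (1 - lam) ^ k * lam ^ (n + 1 - k)) • A k := by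
      rw [hS, Finset.smul_sum]
      refine Finset.sum_congr rfl fun k hk => ?_
      rw [Finset.mem_range] at hk
      have : n + 1 - k = (n - k) + 1 := by omega
      rw [this, smul_smul, pow_succ]
      ring_nf
    have hT2 : (1 - lam) • S' n = ∑ k ∈ range (n + 1),
        ((n.choose k : ℝ) * (1 - lam) ^ (k + 1) * lam ^ (n - k)) • A (k + 1) := by
      rw [hS', Finset.smul_sum]
      refine Finset.sum_congr rfl fun k hk => ?_
      rw [smul_smul, pow_succ]
      ring_nf
    rw [hT1, hT2]
    simp only [hS]
    rw [Finset.sum_range_succ' (fun k => (((n+1).choose k : ℝ) * (1 - lam) ^ k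
      * lam ^ (n + 1 - k)) • A k) (n + 1)]
    have hsplit : ∀ k ∈ range (n + 1),
        ((((n+1).choose (k+1) : ℝ)) * (1 - lam) ^ (k+1) * lam ^ (n + 1 - (k+1))) • A (k+1)
        = ((n.choose k : ℝ) * (1 - lam) ^ (k+1) * lam ^ (n - k)) • A (k+1)
          + ((n.choose (k+1) : ℝ) * (1 - lam) ^ (k+1) * lam ^ (n - k)) • A (k+1) := by
      intro k hk
      have hc : ((n+1).choose (k+1) : ℝ) = (n.choose k : ℝ) + (n.choose (k+1) : ℝ) := by
        rw [Nat.choose_succ_succ]; push_cast; ring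
      have hs : n + 1 - (k + 1) = n - k := by omega
      rw [hc, hs, ← add_smul]
      ring_nf
    rw [Finset.sum_congr rfl hsplit, Finset.sum_add_distrib]
    -- now: Σ T2-part + Σ T3-part + first term = T1-sum + T2-sum
    have hT3 : (∑ k ∈ range (n + 1),
          ((n.choose (k+1) : ℝ) * (1 - lam) ^ (k+1) * lam ^ (n - k)) • A (k+1))
        + (((n+1).choose 0 : ℝ) * (1 - lam) ^ 0 * lam ^ (n + 1 - 0)) • A 0
        = ∑ k ∈ range (n + 1),
          ((n.choose k : ℝ) * (1 - lam) ^ k * lam ^ (n + 1 - k)) • A k := by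
      rw [Finset.sum_range_succ' (fun k => ((n.choose k : ℝ) * (1 - lam) ^ k
        * lam ^ (n + 1 - k)) • A k) n]
      congr 1
      · rw [Finset.sum_range_succ]
        simp only [Nat.choose_succ_self, Nat.cast_zero, zero_mul, zero_smul, add_zero]
        refine Finset.sum_congr rfl fun k hk => ?_
        have : n + 1 - (k + 1) = n - k := by omega
        rw [this]
      · simp
    rw [add_assoc, hT3]
    abel
  intro m n hmn
  have step : ∀ n, S (n + 1) ≤ S n := by
    intro n
    rw [ContinuousLinearMap.le_def]
    have hdiff : S n - S (n + 1) = (1 - lam) • (S n - S' n) := by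
      rw [hident n]
      have : lam • S n + (1 - lam) • S' n = S n - (1 - lam) • (S n - S' n) := by
        rw [smul_sub]
        module
      rw [this]
      abel
    have hSS' : S n - S' n = ∑ k ∈ range (n + 1),
        ((n.choose k : ℝ) * (1 - lam) ^ k * lam ^ (n - k)) • (A k - A (k + 1)) := by
      rw [hS, hS', ← Finset.sum_sub_distrib]
      exact Finset.sum_congr rfl fun k _ => (smul_sub _ _ _).symm
    rw [hdiff, hSS']
    apply myPos_smul hlam1
    apply myPos_sum
    intro k _
    apply myPos_smul (by positivity)
    exact (ContinuousLinearMap.le_def _ _).mp (hA (Nat.le_succ k))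
  exact antitone_nat_of_succ_le step hmn


/-- If `T = U * P` is invertible with `U` unitary and `T*` is
semi-hyponormal (`P ≤ U P U*`), and `λ ∈ (0,1)`, then `U^{*n} P U^n` is decreasing and
converges strongly to some positive `L`, and the weighted binomial averages
`Σ_{k=0}^n C(n,k)(1-λ)^k λ^{n-k} U^{*k} P U^k` are decreasing and converge strongly
to `L` as well. -/
theorem stmt6 {H : Type*} [NormedAddCommGroup H] [InnerProductSpace ℂ H]
    [CompleteSpace H] (T U P : H →L[ℂ] H) (lam : ℝ)
    (hlam : lam ∈ Set.Ioo (0 : ℝ) 1)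
    (hU : U ∈ unitary (H →L[ℂ] H))
    (hP : P.IsPositive) (hP2 : P * P = star T * T)
    (hT : T = U * P) (hTinv : IsUnit T)
    (hsemi : P ≤ U * P * star U) :
    Antitone (fun n : ℕ => (star U) ^ n * P * U ^ n) ∧
    ∃ L : H →L[ℂ] H, L.IsPositive ∧
      (∀ x : H, Filter.Tendsto (fun n : ℕ => ((star U) ^ n * P * U ^ n) x)
        Filter.atTop (nhds (L x))) ∧
      Antitone (fun n : ℕ => ∑ k ∈ Finset.range (n + 1),
        ((n.choose k : ℝ) * (1 - lam) ^ k * lam ^ (n - k)) •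
          ((star U) ^ k * P * U ^ k)) ∧
      (∀ x : H, Filter.Tendsto
        (fun n : ℕ => (∑ k ∈ Finset.range (n + 1),
          ((n.choose k : ℝ) * (1 - lam) ^ k * lam ^ (n - k)) •
            ((star U) ^ k * P * U ^ k)) x)
        Filter.atTop (nhds (L x))) := by
  obtain ⟨hl0, hl1⟩ := hlam
  have hUU : star U * U = 1 := (Unitary.mem_iff.mp hU).1
  set A : ℕ → H →L[ℂ] H := fun n => (star U) ^ n * P * U ^ n with hAdef
  -- positivity of each A n
  have hconj_pos : ∀ (W B : H →L[ℂ] H), B.IsPositive → (star W * B * W).IsPositive := by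
    intro W B hB
    have := hB.adjoint_conj W
    rwa [← ContinuousLinearMap.star_eq_adjoint, ← ContinuousLinearMap.mul_def,
      ← ContinuousLinearMap.mul_def, ← mul_assoc] at this
  have hpos : ∀ n, (A n).IsPositive := by
    intro n
    have := hconj_pos (U ^ n) P hP
    rwa [star_pow] at this
  -- conjugation preserves ≤
  have hconj_le : ∀ (W B C : H →L[ℂ] H), B ≤ C → star W * B * W ≤ star W * C * W := by
    intro W B C hBC
    rw [ContinuousLinearMap.le_def] at hBC ⊢
    have := hconj_pos W _ hBC
    have heq : star W * (C - B) * W = star W * C * W - star W * B * W := by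
      noncomm_ring
    rwa [heq] at this
  -- key step inequality
  have hstep0 : star U * P * U ≤ P := by
    have := hconj_le U _ _ hsemi
    have heq : star U * (U * P * star U) * U = P := by
      have : star U * (U * P * star U) * U = (star U * U) * P * (star U * U) := by
        noncomm_ring
      rw [this, hUU]; noncomm_ring
    rwa [heq] at this
  have hA : Antitone A := by
    apply antitone_nat_of_succ_le
    intro n
    have h1 := hconj_le (U ^ n) _ _ hstep0
    have h2 : (star U) ^ n * (star U * P * U) * U ^ n = A (n + 1) := by
      simp only [hAdef]
      rw [pow_succ (star U) n, pow_succ' U n]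
      noncomm_ring
    have h3 : (star U) ^ n * P * U ^ n = A n := rfl
    rwa [star_pow, h2, h3] at h1
  -- norm bound
  have hUnorm : ∀ (n : ℕ) (x : H), ‖(U ^ n) x‖ = ‖x‖ := fun n x =>
    ContinuousLinearMap.norm_map_of_mem_unitary (pow_mem hU n) x
  have hUstarnorm : ∀ (n : ℕ) (x : H), ‖((star U) ^ n) x‖ = ‖x‖ := fun n x =>
    ContinuousLinearMap.norm_map_of_mem_unitary (pow_mem (Unitary.star_mem hU) n) x
  have hnorm : ∀ n, ‖A n‖ ≤ ‖P‖ := by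
    intro n
    refine ContinuousLinearMap.opNorm_le_bound _ (norm_nonneg P) fun x => ?_
    have : (A n) x = ((star U) ^ n) (P ((U ^ n) x)) := rfl
    rw [this, hUstarnorm]
    calc ‖P ((U ^ n) x)‖ ≤ ‖P‖ * ‖(U ^ n) x‖ := P.le_opNorm _
      _ = ‖P‖ * ‖x‖ := by rw [hUnorm]
  obtain ⟨L, hLpos, hLtendsto⟩ := myLimit hA hpos hnorm (fun B hB x => myPos_norm_sq_le hB x)
  refine ⟨hA, L, hLpos, hLtendsto, myBinom_antitone hA hl0 hl1, fun x => ?_⟩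
  -- binomial convergence at x
  have hbound : ∀ k, ‖A k x - L x‖ ≤ 2 * (‖P‖ * ‖x‖) := by
    intro k
    have h1 : ‖A k x‖ ≤ ‖P‖ * ‖x‖ := le_trans ((A k).le_opNorm x)
      (mul_le_mul_of_nonneg_right (hnorm k) (norm_nonneg x))
    have h2 : ‖L x‖ ≤ ‖P‖ * ‖x‖ := by
      refine le_of_tendsto (hLtendsto x).norm (Filter.Eventually.of_forall fun n => ?_)
      exact le_trans ((A n).le_opNorm x) (mul_le_mul_of_nonneg_right (hnorm n) (norm_nonneg x))
    calc ‖A k x - L x‖ ≤ ‖A k x‖ + ‖L x‖ := norm_sub_le _ _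
      _ ≤ 2 * (‖P‖ * ‖x‖) := by linarith
  have := myBinom_tendsto hl0 hl1 (hLtendsto x) hbound
  refine this.congr fun n => ?_
  simp only [ContinuousLinearMap.sum_apply, ContinuousLinearMap.smul_apply]
  rfl
end

section
/- Let T be an invertible semi-hyponormal operator with polar decomposition T = U|T|, and let L = strong-lim_{n→∞} U^{*n}|T|U^n. Then UL is normal. (Key facts: UL = LU since U*LU = L, making UL quasinormal; an invertible quasinormal operator is normal.) -/
open scoped InnerProductSpace
open Filter

/-- Let `T = U * P` be an invertible semi-hyponormal operator
(`U` unitary, `P = |T|`, `U P U* ≤ P`) and let `L` be the strong operator limit of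
`U^{*n} P U^n`. Then `U * L` is normal. -/
theorem stmt7 {H : Type*} [NormedAddCommGroup H] [InnerProductSpace ℂ H]
    [CompleteSpace H] (T U P L : H →L[ℂ] H)
    (hU : U ∈ unitary (H →L[ℂ] H))
    (hP : P.IsPositive) (hP2 : P * P = star T * T)
    (hT : T = U * P) (hTinv : IsUnit T)
    (hsemi : U * P * star U ≤ P)
    (hL : ∀ x : H, Filter.Tendsto (fun n : ℕ => ((star U) ^ n * P * U ^ n) x)
      Filter.atTop (nhds (L x))) :
    IsStarNormal (U * L) := by
  have hUU : star U * U = 1 := hU.1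
  have hUU' : U * star U = 1 := hU.2
  have hPsa : star P = P := hP.isSelfAdjoint.star_eq
  set A : ℕ → (H →L[ℂ] H) := fun n => (star U) ^ n * P * U ^ n with hA
  have hAsa : ∀ n, star (A n) = A n := by
    intro n
    simp [hA, star_mul, star_pow, hPsa, mul_assoc]
  have hAsym : ∀ n (x y : H), ⟪(A n) x, y⟫_ℂ = ⟪x, (A n) y⟫_ℂ := by
    intro n x y
    rw [← ContinuousLinearMap.adjoint_inner_left]
    congr 1
    rw [← ContinuousLinearMap.star_eq_adjoint, hAsa]
  have hLsa : star L = L := by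
    have hsym : ∀ x y : H, ⟪L x, y⟫_ℂ = ⟪x, L y⟫_ℂ := by
      intro x y
      have h1 : Tendsto (fun n => ⟪(A n) x, y⟫_ℂ) atTop (nhds ⟪L x, y⟫_ℂ) :=
        (hL x).inner tendsto_const_nhds
      have h2 : Tendsto (fun n => ⟪(A n) x, y⟫_ℂ) atTop (nhds ⟪x, L y⟫_ℂ) :=
        (tendsto_const_nhds.inner (hL y)).congr fun n => (hAsym n x y).symm
      exact tendsto_nhds_unique h1 h2
    rw [ContinuousLinearMap.star_eq_adjoint]
    exact ((ContinuousLinearMap.eq_adjoint_iff L L).mpr hsym).symm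
  have halg : ∀ n, A n * U = U * A (n + 1) := by
    intro n
    have e1 : (star U) ^ (n + 1) = star U * (star U) ^ n := pow_succ' _ _
    have e2 : U ^ (n + 1) = U ^ n * U := pow_succ _ _
    simp only [hA, e1, e2, ← mul_assoc, hUU', one_mul]
  have hcomm : U * L = L * U := by
    ext x
    show U (L x) = L (U x)
    have h1 : Tendsto (fun n => (A n) (U x)) atTop (nhds (L (U x))) := hL (U x)
    have h2 : Tendsto (fun n => U ((A (n + 1)) x)) atTop (nhds (U (L x))) :=
      (U.continuous.tendsto _).comp ((hL x).comp (tendsto_add_atTop_nat 1))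
    have key : ∀ n, (A n) (U x) = U ((A (n + 1)) x) := by
      intro n
      have := congrArg (fun S : H →L[ℂ] H => S x) (halg n)
      simpa using this
    exact (tendsto_nhds_unique (h1.congr key) h2).symm
  have hc2 : U * (L * L) = L * L * U := by
    rw [← mul_assoc, hcomm, mul_assoc, hcomm, ← mul_assoc]
  refine ⟨?_⟩
  show star (U * L) * (U * L) = (U * L) * star (U * L)
  rw [star_mul, hLsa, mul_assoc, ← mul_assoc (star U), hUU, one_mul,
    mul_assoc U L, ← mul_assoc L L, ← mul_assoc U, hc2, mul_assoc, hUU', mul_one]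
end

section
/- Let T = U|T| ∈ M_m(ℂ) be the polar decomposition of an invertible centered matrix (so U is unitary). Then there exists a positive integer n with n ≤ m! such that |T| = U^{*n}|T|U^n. -/
open scoped ComplexOrder

open Polynomial Matrix

/-- Two tuples over a linear order with the same multiset of values differ by a permutation. -/
lemma exists_comp_perm_eq_fin {n : ℕ} {α : Type*} [LinearOrder α] {f g : Fin n → α}
    (h : (↑(List.ofFn f) : Multiset α) = ↑(List.ofFn g)) :
    ∃ σ : Equiv.Perm (Fin n), f ∘ σ = g := by
  have hp : (List.ofFn f).Perm (List.ofFn g) := Multiset.coe_eq_coe.mp h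
  have h1 : (List.ofFn (f ∘ Tuple.sort f)).Perm (List.ofFn (g ∘ Tuple.sort g)) :=
    (((Tuple.sort f).ofFn_comp_perm f).trans hp).trans ((Tuple.sort g).ofFn_comp_perm g).symm
  have h2 := List.Perm.eq_of_sortedLE ((Tuple.monotone_sort f).sortedLE_ofFn)
      ((Tuple.monotone_sort g).sortedLE_ofFn) h1
  have h3 : f ∘ Tuple.sort f = g ∘ Tuple.sort g := List.ofFn_injective h2
  refine ⟨((Tuple.sort g).symm).trans (Tuple.sort f), ?_⟩
  funext x
  have := congrFun h3 ((Tuple.sort g).symm x)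
  simpa using this

/-- Two tuples with the same multiset of values differ by a permutation. -/
lemma exists_comp_perm_eq {ι α : Type*} [Fintype ι] {f g : ι → α}
    (h : Multiset.map f Finset.univ.val = Multiset.map g Finset.univ.val) :
    ∃ σ : Equiv.Perm ι, f ∘ σ = g := by
  letI : LinearOrder α := IsWellOrder.linearOrder WellOrderingRel
  let e := Fintype.equivFin ι
  have huniv : Multiset.map (⇑e.symm) Finset.univ.val = Finset.univ.val := by
    have := congrArg Finset.val (Finset.map_univ_equiv e.symm)
    simpa using this
  have key : ∃ σ : Equiv.Perm (Fin (Fintype.card ι)), (f ∘ e.symm) ∘ σ = g ∘ e.symm := by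
    apply exists_comp_perm_eq_fin
    rw [← Fin.univ_val_map, ← Fin.univ_val_map]
    calc Multiset.map (f ∘ e.symm) Finset.univ.val
        = Multiset.map f (Multiset.map (⇑e.symm) Finset.univ.val) :=
          (Multiset.map_map _ _ _).symm
      _ = Multiset.map g (Multiset.map (⇑e.symm) Finset.univ.val) := by rw [huniv, h]
      _ = Multiset.map (g ∘ e.symm) Finset.univ.val := Multiset.map_map _ _ _
  obtain ⟨σ, hσ⟩ := key
  refine ⟨(e.trans σ).trans e.symm, ?_⟩
  funext x
  have := congrFun hσ (e x)
  simpa using this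

/-- The characteristic polynomial is invariant under conjugation. -/
lemma charpoly_conj {n : Type*} [Fintype n] [DecidableEq n]
    (W V M : Matrix n n ℂ) (h1 : V * W = 1) (h2 : W * V = 1) :
    (V * M * W).charpoly = M.charpoly := by
  set Vp := (C : ℂ →+* ℂ[X]).mapMatrix V with hVp
  set Wp := (C : ℂ →+* ℂ[X]).mapMatrix W with hWp
  have hVW : Vp * Wp = 1 := by rw [hVp, hWp, ← _root_.map_mul, h1, _root_.map_one]
  have hs : Vp * Matrix.scalar n (X : ℂ[X]) * Wp = Matrix.scalar n (X : ℂ[X]) := by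
    rw [(Matrix.scalar_commute (X : ℂ[X]) (fun r' => Commute.all _ _) Vp).symm.eq,
      mul_assoc, hVW, mul_one]
  have hc : (V * M * W).charmatrix = Vp * M.charmatrix * Wp := by
    unfold Matrix.charmatrix
    rw [_root_.map_mul, _root_.map_mul, Matrix.mul_sub, Matrix.sub_mul, hs]
  have hdet : Vp.det * Wp.det = 1 := by
    rw [← Matrix.det_mul, hVW, Matrix.det_one]
  unfold Matrix.charpoly
  rw [hc, Matrix.det_mul, Matrix.det_mul]
  linear_combination M.charmatrix.det * hdet

/-- The roots of the characteristic polynomial of a diagonal matrix. -/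
lemma roots_charpoly_diagonal {ι : Type*} [Fintype ι] [DecidableEq ι] (d : ι → ℂ) :
    (Matrix.diagonal d).charpoly.roots = Multiset.map d Finset.univ.val := by
  have h : (Matrix.diagonal d).charmatrix = Matrix.diagonal (fun i => X - C (d i)) := by
    ext i j
    rcases eq_or_ne i j with rfl | hij
    · simp
    · simp [Matrix.charmatrix_apply, Matrix.diagonal_apply_ne _ hij]
  rw [Matrix.charpoly, h, Matrix.det_diagonal]
  have h2 : ∏ i, (X - C (d i)) =
      (Multiset.map (fun a : ℂ => X - C a) (Multiset.map d Finset.univ.val)).prod := by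
    rw [Multiset.map_map]
    rfl
  rw [h2, Polynomial.roots_multiset_prod_X_sub_C]

/-- Conjugation cancellation. -/
lemma conj_cancel {m : ℕ} {U : Matrix (Fin m) (Fin m) ℂ} (j : ℕ)
    (hpow1 : U ^ j * (star U) ^ j = 1) (A : Matrix (Fin m) (Fin m) ℂ) :
    U ^ j * ((star U) ^ j * A * U ^ j) * (star U) ^ j = A := by
  calc U ^ j * ((star U) ^ j * A * U ^ j) * (star U) ^ j
      = (U ^ j * (star U) ^ j) * A * (U ^ j * (star U) ^ j) := by
        simp only [mul_assoc]
    _ = A := by rw [hpow1, one_mul, mul_one]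

/-- Simultaneous diagonalization of a commuting family of Hermitian matrices:
there is a family of "diagonals" `c` determining each matrix, whose diagonal matrices
have the right characteristic polynomials. -/
lemma simdiag {m : ℕ} (f : ℕ → Matrix (Fin m) (Fin m) ℂ) (hHerm : ∀ k, (f k).IsHermitian)
    (hcomm : ∀ j k : ℕ, Commute (f j) (f k)) :
    ∃ c : Fin m → ℕ → ℂ,
      (∀ j k : ℕ, (fun i => c i j) = (fun i => c i k) → f j = f k) ∧
      (∀ k, (Matrix.diagonal (fun i => c i k)).charpoly = (f k).charpoly) := by
  classical
  set b0 := PiLp.basisFun 2 ℂ (Fin m) with hb0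
  set Tl : ℕ → (EuclideanSpace ℂ (Fin m) →ₗ[ℂ] EuclideanSpace ℂ (Fin m)) :=
    fun k => Matrix.toLin b0 b0 (f k) with hTldef
  have hTe : ∀ k, Tl k = Matrix.toEuclideanLin (f k) := fun k => rfl
  have hsym : ∀ k, (Tl k).IsSymmetric := fun k => by
    rw [hTe]; exact Matrix.isHermitian_iff_isSymmetric.mp (hHerm k)
  have hpair : Pairwise (Function.onFun Commute Tl) := by
    intro j k _
    show Tl j * Tl k = Tl k * Tl j
    have hm : ∀ a c : ℕ, Tl a * Tl c = Matrix.toLin b0 b0 (f a * f c) := fun a c => by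
      rw [Matrix.toLin_mul b0 b0 b0, Module.End.mul_eq_comp]
    rw [hm, hm, (hcomm j k).eq]
  set κ : (ℕ → ℂ) → Submodule ℂ (EuclideanSpace ℂ (Fin m)) :=
    fun χ => ⨅ j, Module.End.eigenspace (Tl j) (χ j) with hκ
  have hint : DirectSum.IsInternal κ :=
    LinearMap.IsSymmetric.LinearMap.IsSymmetric.directSum_isInternal_of_pairwise_commute
      hsym hpair
  haveI : Fintype ((χ : ℕ → ℂ) × Fin (Module.finrank ℂ (κ χ))) :=
    FiniteDimensional.fintypeBasisIndex (hint.collectedBasis (fun χ => Module.finBasis ℂ (κ χ)))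
  have hcard : Fintype.card ((χ : ℕ → ℂ) × Fin (Module.finrank ℂ (κ χ))) = m := by
    rw [← Module.finrank_eq_card_basis (hint.collectedBasis (fun χ => Module.finBasis ℂ (κ χ))),
      finrank_euclideanSpace_fin]
  obtain ⟨b, c, hbc⟩ : ∃ (b : Module.Basis (Fin m) ℂ (EuclideanSpace ℂ (Fin m)))
      (c : Fin m → ℕ → ℂ), ∀ (k : ℕ) (i : Fin m), Tl k (b i) = c i k • b i := by
    refine ⟨(hint.collectedBasis (fun χ => Module.finBasis ℂ (κ χ))).reindex
        (Fintype.equivFinOfCardEq hcard),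
      fun i k => ((Fintype.equivFinOfCardEq hcard).symm i).1 k, fun k i => ?_⟩
    rw [Module.Basis.reindex_apply]
    have hm := hint.collectedBasis_mem (fun χ => Module.finBasis ℂ (κ χ))
      ((Fintype.equivFinOfCardEq hcard).symm i)
    simp only [hκ] at hm
    exact Module.End.mem_eigenspace_iff.mp ((Submodule.mem_iInf _).mp hm k)
  have hA : ∀ k, LinearMap.toMatrix b b (Tl k) = Matrix.diagonal (fun i => c i k) := by
    intro k
    ext i j
    rw [LinearMap.toMatrix_apply, hbc k j, _root_.map_smul]
    rcases eq_or_ne i j with rfl | hij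
    · simp [Finsupp.single_apply]
    · simp [Finsupp.single_apply, (Ne.symm hij), Matrix.diagonal_apply_ne _ hij]
  refine ⟨c, ?_, ?_⟩
  · intro j k h
    have hTeq : Tl j = Tl k := (LinearMap.toMatrix b b).injective (by rw [hA j, hA k, h])
    simp only [hTldef] at hTeq
    exact (Matrix.toLin b0 b0).injective hTeq
  · intro k
    rw [← hA k, LinearMap.charpoly_toMatrix]
    rw [← LinearMap.charpoly_toMatrix (Tl k) b0]
    simp only [hTldef]
    rw [LinearMap.toMatrix_toLin]

/-- A matrix polar decomposition `T = U * P` is centered: the family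
`{U^{*m} P U^m, P, U^n P U^{*n}}` is a commuting set. -/
def MatCentered {m : ℕ} (U P : Matrix (Fin m) (Fin m) ℂ) : Prop :=
  ∀ j k : ℕ,
    Commute ((star U) ^ j * P * U ^ j) ((star U) ^ k * P * U ^ k) ∧
    Commute ((star U) ^ j * P * U ^ j) (U ^ k * P * (star U) ^ k) ∧
    Commute (U ^ j * P * (star U) ^ j) (U ^ k * P * (star U) ^ k)

/-- If `T = U * P ∈ M_m(ℂ)` is the polar decomposition of an invertible
centered matrix, then there is a positive integer `n ≤ m!` with `P = U^{*n} P U^n`. -/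
theorem stmt8 {m : ℕ} (T U P : Matrix (Fin m) (Fin m) ℂ)
    (hU : U ∈ unitary (Matrix (Fin m) (Fin m) ℂ))
    (hP : P.PosSemidef) (hP2 : P * P = star T * T)
    (hT : T = U * P) (hTinv : IsUnit T)
    (hcent : MatCentered U P) :
    ∃ n : ℕ, 0 < n ∧ n ≤ Nat.factorial m ∧ P = (star U) ^ n * P * U ^ n := by
  classical
  obtain ⟨hU1, hU2⟩ := Unitary.mem_iff.mp hU
  have hcommU : Commute U (star U) := by rw [Commute, SemiconjBy, hU2, hU1]
  have hpow1 : ∀ k : ℕ, U ^ k * (star U) ^ k = 1 := fun k => by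
    rw [← Commute.mul_pow hcommU, hU2, one_pow]
  have hpow2 : ∀ k : ℕ, (star U) ^ k * U ^ k = 1 := fun k => by
    rw [← Commute.mul_pow hcommU.symm, hU1, one_pow]
  set f : ℕ → Matrix (Fin m) (Fin m) ℂ := fun k => (star U) ^ k * P * U ^ k with hfdef
  have hHerm : ∀ k, (f k).IsHermitian := by
    intro k
    have hsk : (star U) ^ k = (U ^ k)ᴴ := by
      rw [← Matrix.star_eq_conjTranspose, star_pow]
    simp only [hfdef]
    rw [hsk]
    exact Matrix.isHermitian_conjTranspose_mul_mul (U ^ k) hP.1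
  have hcomm : ∀ j k : ℕ, Commute (f j) (f k) := fun j k => (hcent j k).1
  obtain ⟨c, hinj, hcp0⟩ := simdiag f hHerm hcomm
  have hcp : ∀ k, (Matrix.diagonal (fun i => c i k)).charpoly = P.charpoly := by
    intro k
    rw [hcp0 k]
    simp only [hfdef]
    exact charpoly_conj (U ^ k) ((star U) ^ k) P (hpow2 k) (hpow1 k)
  have hmult : ∀ k : ℕ,
      Multiset.map (fun i => c i k) Finset.univ.val = P.charpoly.roots := by
    intro k
    rw [← roots_charpoly_diagonal (fun i => c i k), hcp k]
  set F : Finset (Fin m → ℂ) :=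
    Finset.univ.image (fun σ : Equiv.Perm (Fin m) => (fun i => c i 0) ∘ σ) with hF
  have hmaps : ∀ k ∈ Finset.range (m.factorial + 1), (fun i => c i k) ∈ F := by
    intro k _
    obtain ⟨σ, hσ⟩ := exists_comp_perm_eq (f := fun i => c i 0) (g := fun i => c i k)
      (by rw [hmult 0, hmult k])
    exact Finset.mem_image.mpr ⟨σ, Finset.mem_univ _, hσ⟩
  have hlt : F.card < (Finset.range (m.factorial + 1)).card := by
    rw [Finset.card_range]
    have h1 : F.card ≤ Fintype.card (Equiv.Perm (Fin m)) :=
      le_trans Finset.card_image_le (le_of_eq Finset.card_univ)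
    have h2 : Fintype.card (Equiv.Perm (Fin m)) = m.factorial := by
      rw [Fintype.card_perm, Fintype.card_fin]
    omega
  obtain ⟨j, hj, k, hk, hjk, hgjk⟩ :=
    Finset.exists_ne_map_eq_of_card_lt_of_maps_to hlt hmaps
  have final : ∀ a d : ℕ, a < d → d ≤ m.factorial →
      (fun i => c i a) = (fun i => c i d) →
      ∃ n : ℕ, 0 < n ∧ n ≤ Nat.factorial m ∧ P = (star U) ^ n * P * U ^ n := by
    intro a d hac hc hgac
    obtain ⟨n, rfl⟩ : ∃ n, d = a + n := ⟨d - a, by omega⟩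
    refine ⟨n, by omega, by omega, ?_⟩
    have hfe : f a = f (a + n) := hinj a (a + n) hgac
    have h1 : U ^ a * (f a) * (star U) ^ a = P := conj_cancel a (hpow1 a) P
    have hsplit : f (a + n) = (star U) ^ a * ((star U) ^ n * P * U ^ n) * U ^ a := by
      simp only [hfdef]
      rw [pow_add, pow_add, pow_mul_comm U a n]
      simp only [mul_assoc]
    have h2 : U ^ a * (f (a + n)) * (star U) ^ a = (star U) ^ n * P * U ^ n := by
      rw [hsplit, conj_cancel a (hpow1 a)]
    rw [← h2, ← hfe, h1]
  rcases lt_or_gt_of_ne hjk with h | h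
  · exact final j k h (Nat.lt_succ_iff.mp (Finset.mem_range.mp hk)) hgjk
  · exact final k j h (Nat.lt_succ_iff.mp (Finset.mem_range.mp hj)) hgjk.symm
end

section
/- Let T ∈ B(H) be invertible. Then T is an absolutely norm attaining (AN) operator if and only if T^{-1} is an absolutely minimum attaining (AM) operator; moreover, for invertible T, T is AN if and only if T* is AN. -/
set_option synthInstance.maxHeartbeats 1000000
set_option maxHeartbeats 1000000

/-- `T` is absolutely norm attaining: on every nonzero closed subspace `M`, the
restriction `T|_M` attains its norm `sup{‖Ty‖ : y ∈ M, ‖y‖ = 1}`. -/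
def IsAN {H : Type*} [NormedAddCommGroup H] [InnerProductSpace ℂ H]
    [CompleteSpace H] (T : H →L[ℂ] H) : Prop :=
  ∀ M : Submodule ℂ H, IsClosed (M : Set H) → M ≠ ⊥ →
    ∃ x : H, x ∈ M ∧ ‖x‖ = 1 ∧
      ‖T x‖ = sSup ((fun y => ‖T y‖) '' {y : H | y ∈ M ∧ ‖y‖ = 1})

/-- `T` is absolutely minimum attaining: on every nonzero closed subspace `M`, the
restriction `T|_M` attains its minimum modulus `inf{‖Ty‖ : y ∈ M, ‖y‖ = 1}`. -/
def IsAM {H : Type*} [NormedAddCommGroup H] [InnerProductSpace ℂ H]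
    [CompleteSpace H] (T : H →L[ℂ] H) : Prop :=
  ∀ M : Submodule ℂ H, IsClosed (M : Set H) → M ≠ ⊥ →
    ∃ x : H, x ∈ M ∧ ‖x‖ = 1 ∧
      ‖T x‖ = sInf ((fun y => ‖T y‖) '' {y : H | y ∈ M ∧ ‖y‖ = 1})

section Aux

variable {H : Type*} [NormedAddCommGroup H] [InnerProductSpace ℂ H] [CompleteSpace H]

lemma norm_inv_smul {c : ℝ} (hc : 0 < c) (v : H) :
    ‖(↑c⁻¹ : ℂ) • v‖ = c⁻¹ * ‖v‖ := by
  rw [norm_smul, Complex.norm_real, Real.norm_eq_abs, abs_of_pos (inv_pos.mpr hc)]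

/-- If `A* A = B* B` then `A` and `B` have the same pointwise norms. -/
lemma norm_apply_eq_of_star_mul_self_eq (A B : H →L[ℂ] H)
    (h : star A * A = star B * B) (x : H) : ‖A x‖ = ‖B x‖ := by
  have h1 : ‖A x‖ ^ 2 = RCLike.re (inner ℂ ((star A * A) x) x : ℂ) :=
    ContinuousLinearMap.apply_norm_sq_eq_inner_adjoint_left A x
  have h2 : ‖B x‖ ^ 2 = RCLike.re (inner ℂ ((star B * B) x) x : ℂ) :=
    ContinuousLinearMap.apply_norm_sq_eq_inner_adjoint_left B x
  rw [h] at h1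
  have hsq : ‖A x‖ ^ 2 = ‖B x‖ ^ 2 := h1.trans h2.symm
  calc ‖A x‖ = Real.sqrt (‖A x‖ ^ 2) := (Real.sqrt_sq (norm_nonneg _)).symm
    _ = Real.sqrt (‖B x‖ ^ 2) := by rw [hsq]
    _ = ‖B x‖ := Real.sqrt_sq (norm_nonneg _)

lemma isAN_congr (A B : H →L[ℂ] H) (h : ∀ x, ‖A x‖ = ‖B x‖) :
    IsAN A ↔ IsAN B := by
  unfold IsAN
  simp only [h]

/-- Composing with a surjective isometry on the right preserves `IsAN`. -/
lemma isAN_comp (T W Wi : H →L[ℂ] H) (hWWi : W * Wi = 1) (hWiW : Wi * W = 1)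
    (hW : ∀ x, ‖W x‖ = ‖x‖) (hT : IsAN T) : IsAN (T * W) := by
  have hWiW' : ∀ x, Wi (W x) = x := fun x => by
    have := congrArg (fun A : H →L[ℂ] H => A x) hWiW
    simpa using this
  have hWWi' : ∀ x, W (Wi x) = x := fun x => by
    have := congrArg (fun A : H →L[ℂ] H => A x) hWWi
    simpa using this
  intro M hMc hMb
  set N : Submodule ℂ H := Submodule.map (W : H →ₗ[ℂ] H) M with hN
  have mem_N : ∀ z, z ∈ N ↔ Wi z ∈ M := by
    intro z
    constructor
    · rintro ⟨m, hm, rfl⟩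
      simpa [hWiW'] using hm
    · intro hz
      exact ⟨Wi z, hz, hWWi' z⟩
  have hNc : IsClosed (N : Set H) := by
    have : (N : Set H) = (Wi : H → H) ⁻¹' (M : Set H) := by
      ext z
      simpa using mem_N z
    rw [this]
    exact hMc.preimage Wi.continuous
  have hNb : N ≠ ⊥ := by
    obtain ⟨m, hmM, hm0⟩ := (Submodule.ne_bot_iff M).mp hMb
    refine (Submodule.ne_bot_iff N).mpr ⟨W m, Submodule.mem_map_of_mem hmM, ?_⟩
    intro h0
    apply hm0
    have : ‖W m‖ = 0 := by rw [h0, norm_zero]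
    rw [hW m] at this
    exact norm_eq_zero.mp this
  have hsets : ((fun y => ‖(T * W) y‖) '' {y : H | y ∈ M ∧ ‖y‖ = 1}) =
      ((fun z => ‖T z‖) '' {z : H | z ∈ N ∧ ‖z‖ = 1}) := by
    ext r
    constructor
    · rintro ⟨y, ⟨hyM, hy1⟩, rfl⟩
      exact ⟨W y, ⟨Submodule.mem_map_of_mem hyM, by rw [hW y, hy1]⟩, rfl⟩
    · rintro ⟨z, ⟨hzN, hz1⟩, rfl⟩
      refine ⟨Wi z, ⟨(mem_N z).mp hzN, ?_⟩, ?_⟩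
      · have h' := hW (Wi z)
        rw [hWWi' z] at h'
        rw [← h']
        exact hz1
      · show ‖T (W (Wi z))‖ = ‖T z‖
        rw [hWWi' z]
  obtain ⟨x, hxN, hx1, hsup⟩ := hT N hNc hNb
  refine ⟨Wi x, (mem_N x).mp hxN, ?_, ?_⟩
  · have h' := hW (Wi x)
    rw [hWWi' x] at h'
    rw [← h']
    exact hx1
  · rw [hsets]
    have hval : (T * W) (Wi x) = T x := by
      show T (W (Wi x)) = T x
      rw [hWWi' x]
    rw [hval]
    exact hsup

lemma an_to_am (T S : H →L[ℂ] H) (hTS : T * S = 1) (hST : S * T = 1)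
    (hT : IsAN T) : IsAM S := by
  have hST' : ∀ x, S (T x) = x := fun x => by
    have := congrArg (fun A : H →L[ℂ] H => A x) hST
    simpa using this
  have hTS' : ∀ x, T (S x) = x := fun x => by
    have := congrArg (fun A : H →L[ℂ] H => A x) hTS
    simpa using this
  intro M hMc hMb
  set N : Submodule ℂ H := Submodule.map (S : H →ₗ[ℂ] H) M with hN
  have mem_N : ∀ z, z ∈ N ↔ T z ∈ M := by
    intro z
    constructor
    · rintro ⟨m, hm, rfl⟩
      simpa [hTS'] using hm
    · intro hz
      exact ⟨T z, hz, hST' z⟩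
  have hNc : IsClosed (N : Set H) := by
    have : (N : Set H) = (T : H → H) ⁻¹' (M : Set H) := by
      ext z; simpa using mem_N z
    rw [this]
    exact hMc.preimage T.continuous
  have hNb : N ≠ ⊥ := by
    obtain ⟨m, hmM, hm0⟩ := (Submodule.ne_bot_iff M).mp hMb
    refine (Submodule.ne_bot_iff N).mpr ⟨S m, Submodule.mem_map_of_mem hmM, ?_⟩
    intro h0
    apply hm0
    rw [← hTS' m, h0, map_zero]
  obtain ⟨x, hxN, hx1, hsup⟩ := hT N hNc hNb
  have hx0 : x ≠ 0 := by
    intro h; rw [h, norm_zero] at hx1; norm_num at hx1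
  have hTx0 : T x ≠ 0 := by
    intro h
    apply hx0
    rw [← hST' x, h, map_zero]
  have ht : 0 < ‖T x‖ := norm_pos_iff.mpr hTx0
  have hyM : (↑(‖T x‖)⁻¹ : ℂ) • T x ∈ M :=
    Submodule.smul_mem M _ ((mem_N x).mp hxN)
  have hy1 : ‖(↑(‖T x‖)⁻¹ : ℂ) • T x‖ = 1 := by
    rw [norm_inv_smul ht]
    exact inv_mul_cancel₀ (ne_of_gt ht)
  have hSy : ‖S ((↑(‖T x‖)⁻¹ : ℂ) • T x)‖ = ‖T x‖⁻¹ := by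
    rw [map_smul, norm_inv_smul ht, hST' x, hx1, mul_one]
  refine ⟨_, hyM, hy1, ?_⟩
  rw [hSy]
  have hmem : ‖T x‖⁻¹ ∈ (fun w => ‖S w‖) '' {w : H | w ∈ M ∧ ‖w‖ = 1} :=
    ⟨_, ⟨hyM, hy1⟩, hSy⟩
  have hlb : ∀ q ∈ (fun w => ‖S w‖) '' {w : H | w ∈ M ∧ ‖w‖ = 1}, ‖T x‖⁻¹ ≤ q := by
    rintro q ⟨w, ⟨hwM, hw1⟩, rfl⟩
    have hw0 : w ≠ 0 := by
      intro h; rw [h, norm_zero] at hw1; norm_num at hw1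
    have hSw0 : S w ≠ 0 := by
      intro h
      apply hw0
      rw [← hTS' w, h, map_zero]
    have hq0 : 0 < ‖S w‖ := norm_pos_iff.mpr hSw0
    have hzN : (↑(‖S w‖)⁻¹ : ℂ) • S w ∈ N :=
      Submodule.smul_mem N _ (Submodule.mem_map_of_mem hwM)
    have hz1 : ‖(↑(‖S w‖)⁻¹ : ℂ) • S w‖ = 1 := by
      rw [norm_inv_smul hq0]
      exact inv_mul_cancel₀ (ne_of_gt hq0)
    have hTz : ‖T ((↑(‖S w‖)⁻¹ : ℂ) • S w)‖ = ‖S w‖⁻¹ := by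
      rw [map_smul, norm_inv_smul hq0, hTS' w, hw1, mul_one]
    have hbdd : BddAbove ((fun z => ‖T z‖) '' {z : H | z ∈ N ∧ ‖z‖ = 1}) := by
      refine ⟨‖T‖, ?_⟩
      rintro r ⟨z', ⟨_, hz'1⟩, rfl⟩
      calc ‖T z'‖ ≤ ‖T‖ * ‖z'‖ := T.le_opNorm z'
        _ = ‖T‖ := by rw [hz'1, mul_one]
    have hle : ‖S w‖⁻¹ ≤ ‖T x‖ := by
      rw [hsup]
      exact le_csSup hbdd ⟨_, ⟨hzN, hz1⟩, hTz⟩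
    have h1 : 1 ≤ ‖T x‖ * ‖S w‖ := by
      calc (1 : ℝ) = ‖S w‖⁻¹ * ‖S w‖ := (inv_mul_cancel₀ (ne_of_gt hq0)).symm
        _ ≤ ‖T x‖ * ‖S w‖ := mul_le_mul_of_nonneg_right hle (le_of_lt hq0)
    calc ‖T x‖⁻¹ = ‖T x‖⁻¹ * 1 := (mul_one _).symm
      _ ≤ ‖T x‖⁻¹ * (‖T x‖ * ‖S w‖) :=
          mul_le_mul_of_nonneg_left h1 (le_of_lt (inv_pos.mpr ht))
      _ = ‖S w‖ := by rw [← mul_assoc, inv_mul_cancel₀ (ne_of_gt ht), one_mul]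
  exact le_antisymm (le_csInf ⟨_, hmem⟩ hlb) (csInf_le ⟨‖T x‖⁻¹, hlb⟩ hmem)

lemma am_to_an (T S : H →L[ℂ] H) (hTS : T * S = 1) (hST : S * T = 1)
    (hS : IsAM S) : IsAN T := by
  have hST' : ∀ x, S (T x) = x := fun x => by
    have := congrArg (fun A : H →L[ℂ] H => A x) hST
    simpa using this
  have hTS' : ∀ x, T (S x) = x := fun x => by
    have := congrArg (fun A : H →L[ℂ] H => A x) hTS
    simpa using this
  intro M hMc hMb
  set N : Submodule ℂ H := Submodule.map (T : H →ₗ[ℂ] H) M with hN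
  have mem_N : ∀ z, z ∈ N ↔ S z ∈ M := by
    intro z
    constructor
    · rintro ⟨m, hm, rfl⟩
      simpa [hST'] using hm
    · intro hz
      exact ⟨S z, hz, hTS' z⟩
  have hNc : IsClosed (N : Set H) := by
    have : (N : Set H) = (S : H → H) ⁻¹' (M : Set H) := by
      ext z; simpa using mem_N z
    rw [this]
    exact hMc.preimage S.continuous
  have hNb : N ≠ ⊥ := by
    obtain ⟨m, hmM, hm0⟩ := (Submodule.ne_bot_iff M).mp hMb
    refine (Submodule.ne_bot_iff N).mpr ⟨T m, Submodule.mem_map_of_mem hmM, ?_⟩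
    intro h0
    apply hm0
    rw [← hST' m, h0, map_zero]
  obtain ⟨y, hyN, hy1, hinf⟩ := hS N hNc hNb
  have hy0 : y ≠ 0 := by
    intro h; rw [h, norm_zero] at hy1; norm_num at hy1
  have hSy0 : S y ≠ 0 := by
    intro h
    apply hy0
    rw [← hTS' y, h, map_zero]
  have hq : 0 < ‖S y‖ := norm_pos_iff.mpr hSy0
  have hxM : (↑(‖S y‖)⁻¹ : ℂ) • S y ∈ M :=
    Submodule.smul_mem M _ ((mem_N y).mp hyN)
  have hx1 : ‖(↑(‖S y‖)⁻¹ : ℂ) • S y‖ = 1 := by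
    rw [norm_inv_smul hq]
    exact inv_mul_cancel₀ (ne_of_gt hq)
  have hTx : ‖T ((↑(‖S y‖)⁻¹ : ℂ) • S y)‖ = ‖S y‖⁻¹ := by
    rw [map_smul, norm_inv_smul hq, hTS' y, hy1, mul_one]
  refine ⟨_, hxM, hx1, ?_⟩
  rw [hTx]
  have hmem : ‖S y‖⁻¹ ∈ (fun w => ‖T w‖) '' {w : H | w ∈ M ∧ ‖w‖ = 1} :=
    ⟨_, ⟨hxM, hx1⟩, hTx⟩
  have hub : ∀ p ∈ (fun w => ‖T w‖) '' {w : H | w ∈ M ∧ ‖w‖ = 1}, p ≤ ‖S y‖⁻¹ := by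
    rintro p ⟨w, ⟨hwM, hw1⟩, rfl⟩
    have hw0 : w ≠ 0 := by
      intro h; rw [h, norm_zero] at hw1; norm_num at hw1
    have hTw0 : T w ≠ 0 := by
      intro h
      apply hw0
      rw [← hST' w, h, map_zero]
    have hp0 : 0 < ‖T w‖ := norm_pos_iff.mpr hTw0
    have hzN : (↑(‖T w‖)⁻¹ : ℂ) • T w ∈ N :=
      Submodule.smul_mem N _ (Submodule.mem_map_of_mem hwM)
    have hz1 : ‖(↑(‖T w‖)⁻¹ : ℂ) • T w‖ = 1 := by
      rw [norm_inv_smul hp0]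
      exact inv_mul_cancel₀ (ne_of_gt hp0)
    have hSz : ‖S ((↑(‖T w‖)⁻¹ : ℂ) • T w)‖ = ‖T w‖⁻¹ := by
      rw [map_smul, norm_inv_smul hp0, hST' w, hw1, mul_one]
    have hbdd : BddBelow ((fun z => ‖S z‖) '' {z : H | z ∈ N ∧ ‖z‖ = 1}) := by
      refine ⟨0, ?_⟩
      rintro r ⟨z', _, rfl⟩
      exact norm_nonneg _
    have hle : ‖S y‖ ≤ ‖T w‖⁻¹ := by
      rw [hinf]
      exact csInf_le hbdd ⟨_, ⟨hzN, hz1⟩, hSz⟩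
    have h1 : ‖T w‖ * ‖S y‖ ≤ 1 := by
      calc ‖T w‖ * ‖S y‖ ≤ ‖T w‖ * ‖T w‖⁻¹ :=
            mul_le_mul_of_nonneg_left hle (le_of_lt hp0)
        _ = 1 := mul_inv_cancel₀ (ne_of_gt hp0)
    calc ‖T w‖ = ‖T w‖ * ‖S y‖ * ‖S y‖⁻¹ := by
          rw [mul_assoc, mul_inv_cancel₀ (ne_of_gt hq), mul_one]
      _ ≤ 1 * ‖S y‖⁻¹ :=
          mul_le_mul_of_nonneg_right h1 (le_of_lt (inv_pos.mpr hq))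
      _ = ‖S y‖⁻¹ := one_mul _
  exact le_antisymm (le_csSup ⟨‖S y‖⁻¹, hub⟩ hmem) (csSup_le ⟨_, hmem⟩ hub)

/-- For invertible `T` with a self-adjoint "absolute value" `R` (`R² = T*T`),
`T` is AN iff `T*` is AN. -/
lemma an_star (T S R : H →L[ℂ] H) (hTS : T * S = 1) (hST : S * T = 1)
    (hR2 : R * R = star T * T) (hRsa : star R = R) :
    IsAN T ↔ IsAN (star T) := by
  have cTS : ∀ X : H →L[ℂ] H, T * (S * X) = X := fun X => by
    rw [← mul_assoc, hTS, one_mul]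
  have cST : ∀ X : H →L[ℂ] H, S * (T * X) = X := fun X => by
    rw [← mul_assoc, hST, one_mul]
  have cstar1 : star S * star T = (1 : H →L[ℂ] H) := by
    rw [← star_mul, hTS, star_one]
  have cstar2 : star T * star S = (1 : H →L[ℂ] H) := by
    rw [← star_mul, hST, star_one]
  have cAinvA : ∀ X : H →L[ℂ] H, S * (star S * (star T * (T * X))) = X := fun X => by
    rw [← mul_assoc (star S) (star T) (T * X), cstar1, one_mul, cST]
  have cAAinv : ∀ X : H →L[ℂ] H, star T * (T * (S * (star S * X))) = X := fun X => by
    rw [cTS, ← mul_assoc, cstar2, one_mul]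
  have cRR : ∀ X : H →L[ℂ] H, R * (R * X) = star T * (T * X) := fun X => by
    rw [← mul_assoc, hR2, mul_assoc]
  have cRcomm : ∀ X : H →L[ℂ] H, R * (star T * (T * X)) = star T * (T * (R * X)) :=
    fun X => by rw [← cRR X, ← cRR (R * X)]
  have cRAinv : ∀ X : H →L[ℂ] H, R * (S * (star S * X)) = S * (star S * (R * X)) :=
    fun X => by
      rw [← cAinvA (R * (S * (star S * X))), ← cRcomm (S * (star S * X)), cAAinv X]
  -- the unitary W and its inverse
  set W : H →L[ℂ] H := S * (star S * (R * star T)) with hWdef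
  set Wi : H →L[ℂ] H := T * (S * (star S * R)) with hWidef
  have hWWi : W * Wi = 1 := by
    rw [hWdef, hWidef]
    simp only [mul_assoc]
    rw [cAAinv R, hR2, ← mul_assoc (star S) (star T) T, cstar1, one_mul, hST]
  have hWiW : Wi * W = 1 := by
    rw [hWidef, hWdef]
    simp only [mul_assoc]
    rw [cRAinv (R * star T), cRR (star T), cAinvA (star T), cstar1, mul_one, hTS]
  have hstarW : star W = Wi := by
    have hc : R * (S * star S) = S * (star S * R) := by
      have := cRAinv 1
      simpa [mul_one] using this
    rw [hWdef, hWidef]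
    simp only [star_mul, star_star, hRsa, mul_assoc]
    rw [hc]
  have hWiR : Wi * R = T := by
    rw [hWidef]
    simp only [mul_assoc]
    rw [hR2, ← mul_assoc (star S) (star T) T, cstar1, one_mul, hST, mul_one]
  have hRW : R * W = star T := by
    rw [hWdef]
    rw [cRAinv (R * star T), cRR (star T), cAinvA (star T)]
  have hWiso : ∀ x, ‖W x‖ = ‖x‖ := by
    intro x
    have h1 : star W * W = star (1 : H →L[ℂ] H) * 1 := by
      rw [hstarW, hWiW, star_one, one_mul]
    have := norm_apply_eq_of_star_mul_self_eq W 1 h1 x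
    simpa using this
  have hTWnorm : ∀ y, ‖(T * W) y‖ = ‖star T y‖ := by
    intro y
    apply norm_apply_eq_of_star_mul_self_eq
    rw [star_mul, star_star]
    calc star W * star T * (T * W) = star W * (star T * (T * W)) := by
          rw [mul_assoc]
      _ = star W * (R * (R * W)) := by rw [cRR W]
      _ = (star W * R) * (R * W) := by rw [← mul_assoc]
      _ = T * star T := by rw [hstarW, hWiR, hRW]
  constructor
  · intro hT
    rw [← isAN_congr (T * W) (star T) hTWnorm]
    exact isAN_comp T W Wi hWWi hWiW hWiso hT
  · intro hT'
    rw [← isAN_congr (T * W) (star T) hTWnorm] at hT'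
    have hWiiso : ∀ x, ‖Wi x‖ = ‖x‖ := by
      intro x
      have h1 := hWiso (Wi x)
      have h2 : W (Wi x) = x := by
        have := congrArg (fun A : H →L[ℂ] H => A x) hWWi
        simpa using this
      rw [h2] at h1
      exact h1.symm
    have hfin := isAN_comp (T * W) Wi W hWiW hWWi hWiiso hT'
    have hTW : (T * W) * Wi = T := by
      rw [mul_assoc, hWWi, mul_one]
    rwa [hTW] at hfin

end Aux

/-- For invertible `T` (with inverse `S`): `T` is AN iff `T⁻¹` is AM;
moreover `T` is AN iff `T*` is AN. -/
theorem stmt18 {H : Type*} [NormedAddCommGroup H] [InnerProductSpace ℂ H]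
    [CompleteSpace H] (T S : H →L[ℂ] H)
    (hTS : T * S = 1) (hST : S * T = 1) :
    (IsAN T ↔ IsAM S) ∧ (IsAN T ↔ IsAN (star T)) := by
  constructor
  · exact ⟨an_to_am T S hTS hST, am_to_an T S hTS hST⟩
  · refine an_star T S (CFC.sqrt (star T * T)) hTS hST ?_ ?_
    · have := CFC.sq_sqrt (A := H →L[ℂ] H) (star T * T) (star_mul_self_nonneg T)
      rw [sq] at this
      exact this
    · exact (CFC.sqrt_nonneg (a := star T * T)).isSelfAdjoint.star_eq
end

section
/- Let T ∈ M_m(ℂ) be invertible with polar decomposition T = U|T|, where U = V* D V with V unitary and D = diag(α₁,...,α_m) having pairwise distinct unimodular diagonal entries. Then for λ ∈ (0,1), V*[Σ_{k=0}^n C(n,k)(1-λ)^k λ^{n-k} D^{*k} V|T|V* D^k]V converges as n → ∞ to V*(I ∘ V|T|V*)V, where ∘ is the Hadamard (entrywise) product with the identity matrix (i.e., the diagonal part of V|T|V*). Key scalar fact: for distinct unimodular α_i ≠ α_j, ((1-λ) + λ α_j \bar{α_i})^n → 0 as n → ∞. -/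
open scoped ComplexOrder

private lemma aux_abs_lt {lam : ℝ} (hlam : lam ∈ Set.Ioo (0 : ℝ) 1) {z : ℂ}
    (hz : ‖z‖ = 1) (hz1 : z ≠ 1) :
    ‖(1 - lam : ℂ) * z + (lam : ℂ)‖ < 1 := by
  obtain ⟨h0, h1⟩ := hlam
  have hre : z.re < 1 := by
    rcases lt_or_eq_of_le (Complex.re_le_norm z) with h | h
    · simpa [hz] using h
    · exfalso
      apply hz1
      have hnormSq : Complex.normSq z = 1 := by
        have := Complex.sq_norm z
        rw [hz] at this; simpa using this.symm
      have hre1 : z.re = 1 := by rw [h, hz]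
      have him : z.im = 0 := by
        have : z.re ^ 2 + z.im ^ 2 = 1 := by
          rw [← hnormSq]; simp [Complex.normSq_apply]; ring
        nlinarith
      apply Complex.ext <;> simp [hre1, him]
  have hsq : Complex.normSq ((1 - lam : ℂ) * z + (lam : ℂ)) < 1 := by
    have hnormSq : Complex.normSq z = 1 := by
      have := Complex.sq_norm z
      rw [hz] at this; simpa using this.symm
    have : Complex.normSq ((1 - lam : ℂ) * z + (lam : ℂ))
        = (1 - lam) ^ 2 * (z.re ^ 2 + z.im ^ 2) + 2 * (1 - lam) * lam * z.re + lam ^ 2 := by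
      simp [Complex.normSq_apply, Complex.add_re, Complex.add_im, Complex.mul_re,
        Complex.mul_im, Complex.ofReal_re, Complex.ofReal_im]
      ring
    rw [this]
    have hz2 : z.re ^ 2 + z.im ^ 2 = 1 := by
      rw [← hnormSq]; simp [Complex.normSq_apply]; ring
    rw [hz2]
    nlinarith [mul_pos (mul_pos h0 (by linarith : (0:ℝ) < 1 - lam))
      (by linarith : (0:ℝ) < 1 - z.re)]
  nlinarith [Complex.sq_norm ((1 - lam : ℂ) * z + (lam : ℂ)),
    norm_nonneg ((1 - lam : ℂ) * z + (lam : ℂ)), hsq]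

/-- Let `T = U * P ∈ M_m(ℂ)` be invertible with `U = V* D V`, `V` unitary,
`D = diag(α₁,...,α_m)` with pairwise distinct unimodular entries. For `λ ∈ (0,1)`,
`V*[Σ_{k=0}^n C(n,k)(1-λ)^k λ^{n-k} D^{*k} (V P V*) D^k]V` converges as `n → ∞` to
`V*(I ∘ V P V*)V`, where `∘` is the Hadamard product (so `I ∘ A` is the diagonal part
of `A`). -/
theorem stmt19 {m : ℕ} (T U P V : Matrix (Fin m) (Fin m) ℂ) (α : Fin m → ℂ)
    (lam : ℝ) (hlam : lam ∈ Set.Ioo (0 : ℝ) 1)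
    (hV : V ∈ unitary (Matrix (Fin m) (Fin m) ℂ))
    (hαuni : ∀ i, ‖α i‖ = 1)
    (hαinj : Function.Injective α)
    (hUVD : U = star V * Matrix.diagonal α * V)
    (hP : P.PosSemidef) (hP2 : P * P = star T * T)
    (hT : T = U * P) (hTinv : IsUnit T) :
    Filter.Tendsto
      (fun n : ℕ => star V *
        (∑ k ∈ Finset.range (n + 1),
          ((n.choose k : ℝ) * (1 - lam) ^ k * lam ^ (n - k)) •
            ((star (Matrix.diagonal α)) ^ k * (V * P * star V) *
              (Matrix.diagonal α) ^ k)) * V)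
      Filter.atTop
      (nhds (star V *
        Matrix.hadamard (1 : Matrix (Fin m) (Fin m) ℂ) (V * P * star V) * V)) := by
  set A := V * P * star V with hA
  set S : ℕ → Matrix (Fin m) (Fin m) ℂ := fun n =>
    ∑ k ∈ Finset.range (n + 1),
      ((n.choose k : ℝ) * (1 - lam) ^ k * lam ^ (n - k)) •
        ((star (Matrix.diagonal α)) ^ k * A * (Matrix.diagonal α) ^ k) with hS
  have hconj : ∀ i, (starRingEnd ℂ) (α i) * α i = 1 := by
    intro i
    have := Complex.mul_conj (α i)
    rw [mul_comm] at this
    rw [this]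
    norm_cast
    rw [← Complex.sq_norm, hαuni i]; norm_num
  -- entrywise formula
  have hentry : ∀ n i j, S n i j
      = ((1 - lam : ℂ) * ((starRingEnd ℂ) (α i) * α j) + (lam : ℂ)) ^ n * A i j := by
    intro n i j
    rw [add_pow, Finset.sum_mul]
    rw [hS]
    simp only [Matrix.sum_apply]
    apply Finset.sum_congr rfl
    intro k hk
    have hstar : (star (Matrix.diagonal α) : Matrix (Fin m) (Fin m) ℂ)
        = Matrix.diagonal (fun i => (starRingEnd ℂ) (α i)) := by
      rw [Matrix.star_eq_conjTranspose, Matrix.diagonal_conjTranspose]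
      rfl
    rw [hstar, Matrix.diagonal_pow, Matrix.diagonal_pow]
    simp only [Matrix.smul_apply, Matrix.mul_diagonal, Matrix.diagonal_mul,
      Complex.real_smul, Pi.pow_apply]
    push_cast
    rw [mul_pow, mul_pow]
    ring
  -- entrywise limit
  have hlim : Filter.Tendsto S Filter.atTop
      (nhds (Matrix.hadamard (1 : Matrix (Fin m) (Fin m) ℂ) A)) := by
    apply tendsto_pi_nhds.mpr
    intro i
    rw [tendsto_pi_nhds]
    intro j
    simp only [hentry]
    by_cases hij : i = j
    · subst hij
      have h1 : (1 - lam : ℂ) * ((starRingEnd ℂ) (α i) * α i) + (lam : ℂ) = 1 := by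
        rw [hconj i]; ring
      simp only [h1, one_pow, one_mul]
      have : Matrix.hadamard (1 : Matrix (Fin m) (Fin m) ℂ) A i i = A i i := by
        simp [Matrix.hadamard_apply, Matrix.one_apply_eq]
      rw [this]
      exact tendsto_const_nhds
    · have hz1 : (starRingEnd ℂ) (α i) * α j ≠ 1 := by
        intro h
        apply hij
        apply hαinj
        have hc : (starRingEnd ℂ) (α i) ≠ 0 := by
          intro h0
          have := hconj i
          rw [h0] at this; simp at this
        exact (mul_left_cancel₀ hc (h.trans (hconj i).symm)).symm
      have habs : ‖(starRingEnd ℂ) (α i) * α j‖ = 1 := by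
        rw [norm_mul, Complex.norm_conj, hαuni i, hαuni j, one_mul]
      have hlt := aux_abs_lt hlam habs hz1
      have h0 : Filter.Tendsto
          (fun n : ℕ => ((1 - lam : ℂ) * ((starRingEnd ℂ) (α i) * α j) + (lam : ℂ)) ^ n)
          Filter.atTop (nhds 0) := by
        apply tendsto_pow_atTop_nhds_zero_of_norm_lt_one
        simpa using hlt
      have : Matrix.hadamard (1 : Matrix (Fin m) (Fin m) ℂ) A i j = 0 := by
        simp [Matrix.hadamard_apply, Matrix.one_apply_ne hij]
      rw [this]
      have := h0.mul_const (A i j)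
      simpa using this
  -- compose with continuous conjugation
  have hcont : Continuous (fun X : Matrix (Fin m) (Fin m) ℂ => star V * X * V) :=
    (continuous_const.matrix_mul continuous_id).matrix_mul continuous_const
  exact ((hcont.tendsto _).comp hlim)
end
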